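/- Let X₁, Y₁ be finite sets with |X₁| = m₁ and |Y₁| = n₁. If S ⊆ X₁ × Y₁ is a maximal good set (good and not properly contained in any good subset of X₁ × Y₁), then |S| = m₁ + n₁ - 1. -/

import Mathlib

def IsGood {X₁ Y₁ : Type*} (S : Set (X₁ × Y₁)) : Prop :=
  ∀ f : X₁ × Y₁ → ℝ, ∃ u : X₁ → ℝ, ∃ v : Y₁ → ℝ, ∀ p ∈ S, f p = u p.1 + v p.2

open Set Submodule Module

open Classical in
/-- Indicator function of a point. -/
noncomputable def ee {α : Type*} (a : α) : α → ℝ := fun x => if x = a then 1 else 0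

/-- The incidence vector of a pair. -/
noncomputable def vv {X₁ Y₁ : Type*} (p : X₁ × Y₁) : (X₁ → ℝ) × (Y₁ → ℝ) :=
  (ee p.1, ee p.2)

lemma ee_inj {α : Type*} {a b : α} (h : ee a = ee b) : a = b := by
  have h1 := congrFun h a
  simp only [ee] at h1
  split_ifs at h1 with h2 h3 <;> simp_all

lemma vv_injective {X₁ Y₁ : Type*} : Function.Injective (vv (X₁ := X₁) (Y₁ := Y₁)) := by
  intro p q h
  have h1 : ee p.1 = ee q.1 := congrArg Prod.fst h
  have h2 : ee p.2 = ee q.2 := congrArg Prod.snd h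
  exact Prod.ext (ee_inj h1) (ee_inj h2)

/-- The linear functional pairing with `(u, w)`. -/
noncomputable def LL {X₁ Y₁ : Type*} [Fintype X₁] [Fintype Y₁] (u : X₁ → ℝ) (w : Y₁ → ℝ) :
    ((X₁ → ℝ) × (Y₁ → ℝ)) →ₗ[ℝ] ℝ where
  toFun z := (∑ x, z.1 x * u x) + (∑ y, z.2 y * w y)
  map_add' z z' := by
    simp only [Prod.fst_add, Pi.add_apply, Prod.snd_add, add_mul, Finset.sum_add_distrib]
    ring
  map_smul' c z := by
    simp only [Prod.smul_fst, Pi.smul_apply, smul_eq_mul, Prod.smul_snd, RingHom.id_apply,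
      Finset.mul_sum, mul_assoc, Finset.sum_add_distrib, mul_add]

lemma LL_vv {X₁ Y₁ : Type*} [Fintype X₁] [Fintype Y₁] (u : X₁ → ℝ) (w : Y₁ → ℝ) (p : X₁ × Y₁) :
    LL u w (vv p) = u p.1 + w p.2 := by
  classical
  simp only [LL, vv, ee, LinearMap.coe_mk, AddHom.coe_mk, ite_mul, one_mul, zero_mul]
  rw [Finset.sum_ite_eq' Finset.univ p.1 u, Finset.sum_ite_eq' Finset.univ p.2 w]
  simp

lemma good_indep {X₁ Y₁ : Type*} [Fintype X₁] [Fintype Y₁] {S : Set (X₁ × Y₁)} (hS : IsGood S) :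
    LinearIndependent ℝ (fun p : S => vv p.val) := by
  classical
  haveI : Fintype S := Fintype.ofFinite S
  rw [Fintype.linearIndependent_iff]
  intro g hg q
  obtain ⟨u, w, huv⟩ := hS (fun p => if p = q.val then 1 else 0)
  have h1 : ∑ p : S, g p • (LL u w (vv p.val)) = 0 := by
    have := congrArg (LL u w) hg
    rw [map_sum] at this
    simp only [map_smul] at this
    simpa using this
  simp only [LL_vv] at h1
  have h2 : ∀ p : S, u p.val.1 + w p.val.2 = if p.val = q.val then 1 else 0 := by
    intro p
    exact (huv p.val p.2).symm
  rw [Finset.sum_congr rfl (fun p _ => by rw [h2 p])] at h1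
  have h3 : ∀ p : S, ((p : X₁ × Y₁) = (q : X₁ × Y₁)) = (p = q) := by
    intro p; simp [Subtype.ext_iff]
  simp only [h3, smul_eq_mul, mul_ite, mul_one, mul_zero] at h1
  rwa [Finset.sum_ite_eq' Finset.univ q g, if_pos (Finset.mem_univ q)] at h1

lemma indep_good {X₁ Y₁ : Type*} [Fintype X₁] [Fintype Y₁] {S : Set (X₁ × Y₁)}
    (h : LinearIndependent ℝ (fun p : S => vv p.val)) : IsGood S := by
  intro f
  set b := Basis.span h with hb
  obtain ⟨Φ, hΦ⟩ := LinearMap.exists_extend (b.constr ℝ (fun p : S => f p.val))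
  refine ⟨fun x => Φ (ee x, 0), fun y => Φ (0, ee y), ?_⟩
  intro p hp
  have hv : ((ee p.1, 0) : (X₁ → ℝ) × (Y₁ → ℝ)) + (0, ee p.2) = vv p := by
    simp [vv, Prod.ext_iff]
  have hmem : vv p ∈ span ℝ (Set.range fun q : S => vv q.val) :=
    subset_span ⟨⟨p, hp⟩, rfl⟩
  have key : Φ (vv p) = f p := by
    have h1 : Φ (vv p) = (b.constr ℝ (fun q : S => f q.val)) ⟨vv p, hmem⟩ := by
      have := LinearMap.congr_fun hΦ ⟨vv p, hmem⟩
      simpa using this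
    have h2 : (⟨vv p, hmem⟩ : span ℝ (Set.range fun q : S => vv q.val)) = b ⟨p, hp⟩ := by
      apply Subtype.ext
      rw [hb, Basis.span_apply]
    rw [h1, h2, Basis.constr_basis]
  rw [← key, ← hv, map_add]

theorem stmt_7 {X₁ Y₁ : Type*} [Fintype X₁] [Fintype Y₁] [Nonempty X₁] [Nonempty Y₁]
    (S : Set (X₁ × Y₁)) (hS : IsGood S)
    (hmax : ∀ T : Set (X₁ × Y₁), IsGood T → S ⊆ T → S = T) :
    S.ncard = Fintype.card X₁ + Fintype.card Y₁ - 1 := by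
  classical
  obtain ⟨x₀⟩ := (inferInstance : Nonempty X₁)
  obtain ⟨y₀⟩ := (inferInstance : Nonempty Y₁)
  set T₀ : Set (X₁ × Y₁) := ({x₀} ×ˢ univ) ∪ (univ ×ˢ {y₀}) with hT₀
  have hT₀good : IsGood T₀ := by
    intro f
    refine ⟨fun x => f (x, y₀), fun y => f (x₀, y) - f (x₀, y₀), ?_⟩
    rintro ⟨x, y⟩ hp
    rcases hp with h | h
    · obtain ⟨hx, -⟩ := h
      simp only [mem_singleton_iff] at hx
      subst hx
      ring
    · obtain ⟨-, hy⟩ := h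
      simp only [mem_singleton_iff] at hy
      subst hy
      ring
  -- set-style linear independence
  have hrangeS : (Set.range fun p : S => vv p.val) = vv '' S := by
    ext z; simp [Set.mem_image]
  have hSi : LinearIndependent ℝ ((↑) : (vv '' S) → (X₁ → ℝ) × (Y₁ → ℝ)) :=
    (linearIndepOn_iff_image (vv_injective.injOn)).mp (good_indep hS)
  have hTi : LinearIndependent ℝ ((↑) : (vv '' T₀) → (X₁ → ℝ) × (Y₁ → ℝ)) :=
    (linearIndepOn_iff_image (vv_injective.injOn)).mp (good_indep hT₀good)
  -- maximality gives spanning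
  have hspan : ∀ p : X₁ × Y₁, vv p ∈ span ℝ (vv '' S) := by
    intro p
    by_contra hp
    have hins : LinearIndependent ℝ ((↑) : ↥(insert (vv p) (vv '' S)) → (X₁ → ℝ) × (Y₁ → ℝ)) :=
      LinearIndepOn.id_insert hSi hp
    have hgood : IsGood (insert p S) := by
      apply indep_good
      apply (linearIndepOn_iff_image (vv_injective.injOn)).mpr
      rwa [Set.image_insert_eq]
    have heq := hmax _ hgood (subset_insert p S)
    have hpS : p ∈ S := heq ▸ mem_insert p S
    exact hp (subset_span (mem_image_of_mem _ hpS))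
  have hsub1 : vv '' T₀ ⊆ (span ℝ (vv '' S) : Set ((X₁ → ℝ) × (Y₁ → ℝ))) := by
    rintro _ ⟨p, -, rfl⟩; exact hspan p
  have hsub2 : vv '' S ⊆ (span ℝ (vv '' T₀) : Set ((X₁ → ℝ) × (Y₁ → ℝ))) := by
    rintro _ ⟨p, -, rfl⟩
    have h1 : vv (p.1, y₀) ∈ vv '' T₀ :=
      mem_image_of_mem _ (Or.inr ⟨mem_univ _, rfl⟩)
    have h2 : vv (x₀, p.2) ∈ vv '' T₀ :=
      mem_image_of_mem _ (Or.inl ⟨rfl, mem_univ _⟩)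
    have h3 : vv (x₀, y₀) ∈ vv '' T₀ :=
      mem_image_of_mem _ (Or.inr ⟨mem_univ _, rfl⟩)
    have key : vv p = vv (p.1, y₀) + vv (x₀, p.2) - vv (x₀, y₀) := by
      simp only [vv, Prod.ext_iff, Prod.fst_add, Prod.snd_add, Prod.fst_sub, Prod.snd_sub]
      constructor <;> funext t <;> simp [ee]
    rw [key]
    exact sub_mem (add_mem (subset_span h1) (subset_span h2)) (subset_span h3)
  have hspaneq : span ℝ (vv '' S) = span ℝ (vv '' T₀) :=
    le_antisymm (span_le.mpr hsub2) (span_le.mpr hsub1)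
  haveI : Fintype (vv '' S : Set ((X₁ → ℝ) × (Y₁ → ℝ))) := Fintype.ofFinite _
  haveI : Fintype (vv '' T₀ : Set ((X₁ → ℝ) × (Y₁ → ℝ))) := Fintype.ofFinite _
  have h1 := finrank_span_set_eq_card hSi
  have h2 := finrank_span_set_eq_card hTi
  rw [hspaneq] at h1
  have hcS : (vv '' S).toFinset.card = S.ncard := by
    rw [← Set.ncard_eq_toFinset_card', ncard_image_of_injective _ vv_injective]
  have hcT : (vv '' T₀).toFinset.card = T₀.ncard := by
    rw [← Set.ncard_eq_toFinset_card', ncard_image_of_injective _ vv_injective]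
  -- cardinality of T₀
  have hA : ({x₀} ×ˢ (univ : Set Y₁)).ncard = Fintype.card Y₁ := by
    have : ({x₀} ×ˢ (univ : Set Y₁)) = (fun y => (x₀, y)) '' univ := by
      ext ⟨a, b⟩; simp [eq_comm]
    rw [this, ncard_image_of_injective _ (fun a b h => (Prod.ext_iff.mp h).2), ncard_univ,
      Nat.card_eq_fintype_card]
  have hB : ((univ : Set X₁) ×ˢ {y₀}).ncard = Fintype.card X₁ := by
    have : ((univ : Set X₁) ×ˢ {y₀}) = (fun x => (x, y₀)) '' univ := by
      ext ⟨a, b⟩; simp [eq_comm]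
    rw [this, ncard_image_of_injective _ (fun a b h => (Prod.ext_iff.mp h).1), ncard_univ,
      Nat.card_eq_fintype_card]
  have hAB : (({x₀} ×ˢ (univ : Set Y₁)) ∩ ((univ : Set X₁) ×ˢ {y₀})) = {(x₀, y₀)} := by
    ext ⟨a, b⟩; simp [and_comm, eq_comm]
  have hcard := Set.ncard_union_add_ncard_inter ({x₀} ×ˢ (univ : Set Y₁))
    ((univ : Set X₁) ×ˢ {y₀}) (toFinite _) (toFinite _)
  rw [hAB, hA, hB, Set.ncard_singleton] at hcard
  have hx : 1 ≤ Fintype.card X₁ := Fintype.card_pos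
  have hy : 1 ≤ Fintype.card Y₁ := Fintype.card_pos
  have hT₀card : T₀.ncard = Fintype.card X₁ + Fintype.card Y₁ - 1 := by
    rw [hT₀]; omega
  rw [← hcS, ← h1, h2, hcT, hT₀card]
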